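/- In the Harper–Klain–Rota lemma (m_1 ≥ ⋯ ≥ m_N ≥ 0, q_k ∈ [0,1], Σq_k ≤ P, m_P > 0), equality q_1 m_1 + ⋯ + q_N m_N = m_1 + ⋯ + m_P holds if and only if q_k = 1 for all k with m_k > m_P, q_k = 0 for all k with m_k < m_P, and the sum of q_k over indices with m_k = m_P equals P - P', where P' is the number of indices k with m_k > m_P. -/
import Mathlib


open Finset

/-- Equality case of the Harper–Klain–Rota lemma: with `m 0 ≥ ⋯ ≥ m (N-1) ≥ 0`,
`q k ∈ [0,1]`, `1 ≤ P ≤ N`, `∑ q k ≤ P`, and `m_P > 0` (here `mP` is the `P`-th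
largest value, at index `P - 1`), equality `∑ q k * m k = m_1 + ⋯ + m_P` holds iff
`q k = 1` whenever `m k > mP`, `q k = 0` whenever `m k < mP`, and the `q k` over
indices with `m k = mP` sum to `P - P'` where `P'` is the number of indices with
`m k > mP`. -/
theorem harper_klain_rota_equality (N P : ℕ) (hP1 : 1 ≤ P) (hPN : P ≤ N)
    (m q : Fin N → ℝ) (hm : Antitone m) (hm0 : ∀ k, 0 ≤ m k)
    (hq0 : ∀ k, 0 ≤ q k) (hq1 : ∀ k, q k ≤ 1)
    (hsum : ∑ k, q k ≤ P)
    (mP : ℝ) (hmP : mP = m ⟨P - 1, by omega⟩) (hmPpos : 0 < mP)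
    (P' : ℕ) (hP' : P' = (Finset.univ.filter (fun k : Fin N => mP < m k)).card) :
    (∑ k, q k * m k =
        ∑ k ∈ Finset.univ.filter (fun k : Fin N => (k : ℕ) < P), m k) ↔
      ((∀ k, mP < m k → q k = 1) ∧ (∀ k, m k < mP → q k = 0) ∧
        ∑ k ∈ Finset.univ.filter (fun k : Fin N => m k = mP), q k
          = (P : ℝ) - (P' : ℝ)) := by
  classical
  set A := Finset.univ.filter (fun k : Fin N => mP < m k) with hA
  set B := Finset.univ.filter (fun k : Fin N => m k = mP) with hB
  set C := Finset.univ.filter (fun k : Fin N => m k < mP) with hC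
  set LP := Finset.univ.filter (fun k : Fin N => (k : ℕ) < P) with hLP
  -- claim (a): indices < P have m k ≥ mP
  have ha : ∀ k : Fin N, (k : ℕ) < P → mP ≤ m k := by
    intro k hk
    rw [hmP]
    exact hm (by simp only [Fin.le_def]; omega)
  -- claim (b): m k > mP forces k < P
  have hb : ∀ k : Fin N, mP < m k → (k : ℕ) < P := by
    intro k hk
    by_contra h
    have : m k ≤ mP := by rw [hmP]; exact hm (by simp only [Fin.le_def]; omega)
    linarith
  have hAsub : A ⊆ LP := by
    intro k hk
    simp only [hA, hLP, Finset.mem_filter, Finset.mem_univ, true_and] at *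
    exact hb k hk
  -- partition of the sum over univ into A, B, C
  have hpart : ∀ f : Fin N → ℝ,
      ∑ k, f k = ∑ k ∈ A, f k + ∑ k ∈ B, f k + ∑ k ∈ C, f k := by
    intro f
    rw [← Finset.sum_filter_add_sum_filter_not Finset.univ (fun k => mP < m k) f]
    rw [← Finset.sum_filter_add_sum_filter_not
        (Finset.univ.filter (fun k => ¬ mP < m k)) (fun k => m k = mP) f,
        Finset.filter_filter, Finset.filter_filter, ← add_assoc]
    congr 2
    · apply Finset.sum_congr _ (fun _ _ => rfl)
      apply Finset.filter_congr
      intro k _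
      constructor
      · rintro ⟨_, h⟩; exact h
      · intro h; exact ⟨by simp [h], h⟩
    · apply Finset.filter_congr
      intro k _
      constructor
      · rintro ⟨h1, h2⟩; exact lt_of_le_of_ne (le_of_not_gt h1) h2
      · intro h; exact ⟨not_lt.2 (le_of_lt h), ne_of_lt h⟩
  -- cardinality of LP is P
  have hLPcard : LP.card = P := by
    have : LP = Finset.map (Fin.castLEEmb hPN) Finset.univ := by
      ext k
      simp only [hLP, Finset.mem_filter, Finset.mem_univ, true_and, Finset.mem_map]
      constructor
      · intro hk
        exact ⟨⟨(k : ℕ), hk⟩, by simp [Fin.ext_iff]⟩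
      · rintro ⟨j, _, rfl⟩
        simpa using j.isLt
    rw [this, Finset.card_map, Finset.card_univ, Fintype.card_fin]
  -- RHS rewritten
  have hRHS : ∑ k ∈ LP, m k = ∑ k ∈ A, (m k - mP) + P * mP := by
    have h1 : ∑ k ∈ A, (m k - mP) = ∑ k ∈ LP, (m k - mP) := by
      apply Finset.sum_subset hAsub
      intro k hk hkA
      simp only [hLP, Finset.mem_filter, Finset.mem_univ, true_and] at hk
      simp only [hA, Finset.mem_filter, Finset.mem_univ, true_and, not_lt] at hkA
      have := ha k hk
      linarith
    rw [h1, Finset.sum_sub_distrib, Finset.sum_const, hLPcard, nsmul_eq_mul]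
    ring
  -- LHS rewritten
  have hLHS : ∑ k, q k * m k =
      ∑ k ∈ A, q k * (m k - mP) + ∑ k ∈ C, q k * (m k - mP) + mP * ∑ k, q k := by
    have h1 : ∑ k, q k * m k = ∑ k, q k * (m k - mP) + mP * ∑ k, q k := by
      rw [Finset.mul_sum, ← Finset.sum_add_distrib]
      apply Finset.sum_congr rfl
      intro k _; ring
    have h2 : ∑ k, q k * (m k - mP)
        = ∑ k ∈ A, q k * (m k - mP) + ∑ k ∈ C, q k * (m k - mP) := by
      rw [hpart (fun k => q k * (m k - mP))]
      have hBz : ∑ k ∈ B, q k * (m k - mP) = 0 := by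
        apply Finset.sum_eq_zero
        intro k hk
        simp only [hB, Finset.mem_filter, Finset.mem_univ, true_and] at hk
        rw [hk]; ring
      rw [hBz]; ring
    rw [h1, h2]
  -- the key decomposition
  have hdiff : ∑ k, q k * m k - ∑ k ∈ LP, m k =
      (∑ k ∈ A, (q k - 1) * (m k - mP)) + (∑ k ∈ C, q k * (m k - mP))
        + mP * (∑ k, q k - P) := by
    rw [hLHS, hRHS, Finset.sum_sub_distrib]
    have : ∑ k ∈ A, (q k - 1) * (m k - mP)
        = ∑ k ∈ A, q k * (m k - mP) - ∑ k ∈ A, (m k - mP) := by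
      rw [← Finset.sum_sub_distrib]
      apply Finset.sum_congr rfl
      intro k _; ring
    rw [this, Finset.sum_sub_distrib]
    ring
  -- nonpositivity of each term
  have hT1 : ∀ k ∈ A, (q k - 1) * (m k - mP) ≤ 0 := by
    intro k hk
    simp only [hA, Finset.mem_filter, Finset.mem_univ, true_and] at hk
    have := hq1 k
    nlinarith
  have hT2 : ∀ k ∈ C, q k * (m k - mP) ≤ 0 := by
    intro k hk
    simp only [hC, Finset.mem_filter, Finset.mem_univ, true_and] at hk
    have := hq0 k
    nlinarith
  have hT3 : mP * (∑ k, q k - P) ≤ 0 := by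
    have : ∑ k, q k - P ≤ 0 := by linarith
    nlinarith
  have hAone : ∑ k ∈ A, (1 : ℝ) = (P' : ℝ) := by
    rw [Finset.sum_const, hP']
    simp [hA]
  rw [← sub_eq_zero]
  rw [hdiff]
  constructor
  · intro heq
    have h1 : ∑ k ∈ A, (q k - 1) * (m k - mP) ≤ 0 := Finset.sum_nonpos hT1
    have h2 : ∑ k ∈ C, q k * (m k - mP) ≤ 0 := Finset.sum_nonpos hT2
    have e1 : ∑ k ∈ A, (q k - 1) * (m k - mP) = 0 := by linarith
    have e2 : ∑ k ∈ C, q k * (m k - mP) = 0 := by linarith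
    have e3 : mP * (∑ k, q k - P) = 0 := by linarith
    have hQ1 : ∀ k, mP < m k → q k = 1 := by
      intro k hk
      have hkA : k ∈ A := by simp [hA, hk]
      have := (Finset.sum_eq_zero_iff_of_nonpos hT1).1 e1 k hkA
      rcases mul_eq_zero.1 this with h | h
      · linarith
      · exfalso; simp only [hA, Finset.mem_filter, Finset.mem_univ, true_and] at hkA
        linarith
    have hQ0 : ∀ k, m k < mP → q k = 0 := by
      intro k hk
      have hkC : k ∈ C := by simp [hC, hk]
      have := (Finset.sum_eq_zero_iff_of_nonpos hT2).1 e2 k hkC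
      rcases mul_eq_zero.1 this with h | h
      · exact h
      · exfalso; linarith
    refine ⟨hQ1, hQ0, ?_⟩
    have hsumP : ∑ k, q k = (P : ℝ) := by
      rcases mul_eq_zero.1 e3 with h | h
      · linarith
      · linarith
    have hAq : ∑ k ∈ A, q k = (P' : ℝ) := by
      rw [← hAone]
      apply Finset.sum_congr rfl
      intro k hk
      simp only [hA, Finset.mem_filter, Finset.mem_univ, true_and] at hk
      exact hQ1 k hk
    have hCq : ∑ k ∈ C, q k = 0 := by
      apply Finset.sum_eq_zero
      intro k hk
      simp only [hC, Finset.mem_filter, Finset.mem_univ, true_and] at hk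
      exact hQ0 k hk
    have := hpart q
    rw [hsumP, hAq, hCq] at this
    linarith
  · rintro ⟨hQ1, hQ0, hBq⟩
    have e1 : ∑ k ∈ A, (q k - 1) * (m k - mP) = 0 := by
      apply Finset.sum_eq_zero
      intro k hk
      simp only [hA, Finset.mem_filter, Finset.mem_univ, true_and] at hk
      rw [hQ1 k hk]; ring
    have e2 : ∑ k ∈ C, q k * (m k - mP) = 0 := by
      apply Finset.sum_eq_zero
      intro k hk
      simp only [hC, Finset.mem_filter, Finset.mem_univ, true_and] at hk
      rw [hQ0 k hk]; ring
    have hAq : ∑ k ∈ A, q k = (P' : ℝ) := by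
      rw [← hAone]
      apply Finset.sum_congr rfl
      intro k hk
      simp only [hA, Finset.mem_filter, Finset.mem_univ, true_and] at hk
      exact hQ1 k hk
    have hCq : ∑ k ∈ C, q k = 0 := by
      apply Finset.sum_eq_zero
      intro k hk
      simp only [hC, Finset.mem_filter, Finset.mem_univ, true_and] at hk
      exact hQ0 k hk
    have hsumP : ∑ k, q k = (P : ℝ) := by
      rw [hpart q, hAq, hCq, hBq]; ring
    rw [e1, e2, hsumP]
    ring
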